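/- Let f : ℝ^d → ℝ be a differentiable function with gradient g = ∇f(x) at a point x ∈ ℝ^d, let q ≥ 1, and let u_1, …, u_q be i.i.d. vectors sampled uniformly from the unit sphere 𝕊 = {u ∈ ℝ^d : ‖u‖ = 1}. Then for every coordinate k ∈ {1, …, d}, the expectation over u_1, …, u_q of the squared k-th coordinate of the scaled averaged projected-gradient estimator (d/q) Σ_{i=1}^q ⟨g, u_i⟩ u_i equals d(‖g‖² + 2 g_k²)/(q(d+2)) + ((q−1)/q) g_k². In vector form, E_u[((d/q) Σ_{i=1}^q ⟨∇f(x), u_i⟩ u_i)²] = d(‖∇f(x)‖² 1_d + 2 ∇f(x)²)/(q(d+2)) + ((q−1)/q) ∇f(x)², where (·)² denotes the element-wise square. -/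

import Mathlib

open MeasureTheory ProbabilityTheory Metric
open scoped RealInnerProductSpace ENNReal

noncomputable section

/-- The (unnormalized) surface measure of the unit sphere of `ℝ^d`, pushed forward to `ℝ^d`. -/
def sphereMeasure (d : ℕ) : Measure (EuclideanSpace ℝ (Fin d)) :=
  Measure.map Subtype.val ((volume : Measure (EuclideanSpace ℝ (Fin d))).toSphere)

/-- The uniform probability distribution on the unit sphere `𝕊 = {u ∈ ℝ^d : ‖u‖ = 1}`. -/
def uniformSphere (d : ℕ) : Measure (EuclideanSpace ℝ (Fin d)) :=
  (sphereMeasure d Set.univ)⁻¹ • sphereMeasure d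

instance (d : ℕ) [NeZero d] : IsProbabilityMeasure (uniformSphere d) := by
  constructor
  have hmap : sphereMeasure d Set.univ
      = (volume : Measure (EuclideanSpace ℝ (Fin d))).toSphere Set.univ := by
    rw [sphereMeasure, Measure.map_apply measurable_subtype_coe MeasurableSet.univ]
    simp
  have h0 : sphereMeasure d Set.univ ≠ 0 := by
    rw [hmap, Measure.toSphere_apply_univ]
    refine mul_ne_zero ?_ ?_
    · simp [finrank_euclideanSpace_fin, NeZero.ne d]
    · exact (measure_ball_pos _ _ one_pos).ne'
  have htop : sphereMeasure d Set.univ ≠ ⊤ := by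
    rw [hmap]
    exact (measure_lt_top _ _).ne
  rw [uniformSphere, Measure.smul_apply, smul_eq_mul, ENNReal.inv_mul_cancel h0 htop]

namespace ZOAux

open Set Real

/-- radial integral -/
def I (m : ℕ) : ℝ := ∫ r in Ioi (0:ℝ), r ^ m * Real.exp (-r ^ 2)

lemma I_eq (m : ℕ) : I m = (1/2) * Real.Gamma ((m + 1) / 2) := by
  have h : I m = ∫ r in Ioi (0:ℝ), r ^ (m:ℝ) * Real.exp (- r ^ (2:ℝ)) := by
    refine setIntegral_congr_fun measurableSet_Ioi fun x hx => ?_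
    rw [Real.rpow_natCast, show ((2:ℝ)) = ((2:ℕ):ℝ) by norm_num, Real.rpow_natCast]
  have hm : (-1:ℝ) < (m:ℝ) := lt_of_lt_of_le neg_one_lt_zero (Nat.cast_nonneg m)
  rw [h, integral_rpow_mul_exp_neg_rpow (by norm_num) hm]

lemma I_pos (m : ℕ) : 0 < I m := by
  rw [I_eq]
  have := Real.Gamma_pos_of_pos (s := ((m:ℝ) + 1)/2) (by positivity)
  linarith

/-- one-dimensional Gaussian moment -/
def G (m : ℕ) : ℝ := ∫ x : ℝ, x ^ m * Real.exp (-x ^ 2)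

lemma G_odd {m : ℕ} (hm : Odd m) : G m = 0 := by
  have h := integral_neg_eq_self (fun x : ℝ => x ^ m * Real.exp (-x ^ 2)) volume
  have heq : ∀ x : ℝ, (-x) ^ m * Real.exp (-(-x) ^ 2) = -(x ^ m * Real.exp (-x ^ 2)) := by
    intro x; rw [hm.neg_pow, neg_sq, neg_mul]
  simp only [heq, integral_neg] at h
  have : -G m = G m := h
  linarith

lemma G_even {m : ℕ} (hm : Even m) : G m = 2 * I m := by
  have h : ∀ x : ℝ, x ^ m * Real.exp (-x ^ 2) = |x| ^ m * Real.exp (-|x| ^ 2) := by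
    intro x; rw [Even.pow_abs hm, sq_abs]
  calc G m = ∫ x : ℝ, |x| ^ m * Real.exp (-|x| ^ 2) := by
        unfold G; simp_rw [← h]
    _ = 2 * ∫ x in Ioi (0:ℝ), x ^ m * Real.exp (-x ^ 2) :=
        integral_comp_abs (f := fun r => r ^ m * Real.exp (-r ^ 2))
    _ = 2 * I m := rfl

lemma G_zero_pos : 0 < G 0 := by rw [G_even Even.zero]; linarith [I_pos 0]

lemma G0_eq : G 0 = Real.Gamma (1/2) := by
  rw [G_even Even.zero, I_eq]; norm_num; ring

lemma G1_eq : G 1 = 0 := G_odd odd_one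
lemma G3_eq : G 3 = 0 := G_odd (by decide)

lemma G2_eq : G 2 = Real.Gamma (1/2) / 2 := by
  rw [G_even (by decide), I_eq]
  have : ((2:ℕ):ℝ) = 2 := by norm_num
  rw [this, show ((2:ℝ) + 1)/2 = 1/2 + 1 by ring, Real.Gamma_add_one (by norm_num)]
  ring

lemma G4_eq : G 4 = (3/4) * Real.Gamma (1/2) := by
  rw [G_even (by decide), I_eq]
  have : ((4:ℕ):ℝ) = 4 := by norm_num
  rw [this, show ((4:ℝ) + 1)/2 = 3/2 + 1 by ring, Real.Gamma_add_one (by norm_num),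
    show (3:ℝ)/2 = 1/2 + 1 by ring, Real.Gamma_add_one (by norm_num)]
  ring

/-- polar decomposition of a Gaussian-weighted homogeneous integral -/
lemma polar {d : ℕ} [NeZero d] (m : ℕ) (F : EuclideanSpace ℝ (Fin d) → ℝ)
    (hF : ∀ (r : ℝ), 0 < r → ∀ x, F (r • x) = r ^ m * F x) :
    ∫ x : EuclideanSpace ℝ (Fin d), F x * Real.exp (-‖x‖ ^ 2)
      = (∫ u : sphere (0 : EuclideanSpace ℝ (Fin d)) 1, F u ∂((volume : Measure (EuclideanSpace ℝ (Fin d))).toSphere))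
          * I (d - 1 + m) := by
  have hd : Module.finrank ℝ (EuclideanSpace ℝ (Fin d)) = d := finrank_euclideanSpace_fin
  set f : sphere (0 : EuclideanSpace ℝ (Fin d)) 1 × Ioi (0:ℝ) → ℝ :=
    fun p => F p.1 * ((p.2 : ℝ) ^ m * Real.exp (-(p.2 : ℝ) ^ 2)) with hf
  calc
    ∫ x : EuclideanSpace ℝ (Fin d), F x * Real.exp (-‖x‖ ^ 2)
        = ∫ x : ({0}ᶜ : Set (EuclideanSpace ℝ (Fin d))), F x.1 * Real.exp (-‖x.1‖ ^ 2) ∂((volume : Measure (EuclideanSpace ℝ (Fin d))).comap (↑)) := by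
          rw [integral_subtype_comap (measurableSet_singleton _).compl
            (fun x => F x * Real.exp (-‖x‖ ^ 2)), restrict_compl_singleton]
    _ = ∫ p : sphere (0 : EuclideanSpace ℝ (Fin d)) 1 × Ioi (0:ℝ), f p
          ∂((volume : Measure (EuclideanSpace ℝ (Fin d))).toSphere.prod
            (.volumeIoiPow (Module.finrank ℝ (EuclideanSpace ℝ (Fin d)) - 1))) := by
          rw [← (volume : Measure (EuclideanSpace ℝ (Fin d))).measurePreserving_homeomorphUnitSphereProd.integral_comp
            (Homeomorph.measurableEmbedding _) f]
          refine integral_congr_ae (.of_forall fun x => ?_)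
          have hx : x.1 ≠ 0 := x.2
          have hxn : (0:ℝ) < ‖x.1‖ := norm_pos_iff.2 hx
          simp only [hf, homeomorphUnitSphereProd_apply_fst_coe,
            homeomorphUnitSphereProd_apply_snd_coe]
          have : F x.1 = ‖x.1‖ ^ m * F (‖x.1‖⁻¹ • x.1) := by
            rw [← hF _ hxn, smul_inv_smul₀ hxn.ne']
          rw [this]; ring
    _ = (∫ u : sphere (0 : EuclideanSpace ℝ (Fin d)) 1, F u ∂(volume : Measure (EuclideanSpace ℝ (Fin d))).toSphere)
          * ∫ r : Ioi (0:ℝ), ((r : ℝ) ^ m * Real.exp (-(r : ℝ) ^ 2))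
              ∂(Measure.volumeIoiPow (Module.finrank ℝ (EuclideanSpace ℝ (Fin d)) - 1)) :=
        integral_prod_mul (fun u : sphere (0 : EuclideanSpace ℝ (Fin d)) 1 => F u)
          (fun r : Ioi (0:ℝ) => (r : ℝ) ^ m * Real.exp (-(r : ℝ) ^ 2))
    _ = (∫ u : sphere (0 : EuclideanSpace ℝ (Fin d)) 1, F u ∂(volume : Measure (EuclideanSpace ℝ (Fin d))).toSphere) * I (d - 1 + m) := by
          congr 1
          rw [hd]
          simp only [Measure.volumeIoiPow, ENNReal.ofReal]
          rw [integral_withDensity_eq_integral_smul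
            ((measurable_subtype_coe.pow_const _).real_toNNReal),
            integral_subtype_comap measurableSet_Ioi
              (fun a : ℝ => Real.toNNReal (a ^ (d - 1)) • (a ^ m * Real.exp (-a ^ 2)))]
          refine setIntegral_congr_fun measurableSet_Ioi fun x hx => ?_
          rw [NNReal.smul_def, Real.coe_toNNReal _ (pow_nonneg hx.out.le _), smul_eq_mul,
            ← mul_assoc, ← pow_add]

lemma gauss_mono {d : ℕ} (a : Fin d → ℕ) :
    ∫ x : EuclideanSpace ℝ (Fin d), (∏ i, x i ^ a i) * Real.exp (-‖x‖ ^ 2)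
      = ∏ i, G (a i) := by
  have h1 : ∀ x : EuclideanSpace ℝ (Fin d),
      (∏ i, x i ^ a i) * Real.exp (-‖x‖ ^ 2)
        = ∏ i, (x i ^ a i * Real.exp (-(x i) ^ 2)) := by
    intro x
    have hn : ‖x‖ ^ 2 = ∑ i, (x i) ^ 2 := by
      rw [EuclideanSpace.norm_eq, Real.sq_sqrt (by positivity)]
      simp [sq_abs]
    rw [hn, ← Finset.sum_neg_distrib, Real.exp_sum, Finset.prod_mul_distrib]
  simp_rw [h1]
  refine ((EuclideanSpace.volume_preserving_symm_measurableEquiv_toLp (Fin d)).integral_comp'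
    (fun y : Fin d → ℝ => ∏ i, (y i ^ a i * Real.exp (-(y i) ^ 2)))).trans ?_
  exact integral_fintype_prod_eq_prod (fun i (t : ℝ) => t ^ a i * Real.exp (-t ^ 2))

variable {d : ℕ} [NeZero d]

lemma sphere_mono (a : Fin d → ℕ) :
    ∫ u : sphere (0 : EuclideanSpace ℝ (Fin d)) 1, (∏ i, (u : EuclideanSpace ℝ (Fin d)) i ^ a i)
        ∂((volume : Measure (EuclideanSpace ℝ (Fin d))).toSphere)
      = (∏ i, G (a i)) / I (d - 1 + ∑ i, a i) := by
  have hhom : ∀ (r : ℝ), 0 < r → ∀ x : EuclideanSpace ℝ (Fin d),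
      (∏ i, (r • x) i ^ a i) = r ^ (∑ i, a i) * ∏ i, x i ^ a i := by
    intro r hr x
    have : ∀ i, (r • x) i ^ a i = r ^ a i * x i ^ a i := by
      intro i
      rw [PiLp.smul_apply, smul_eq_mul, mul_pow]
    simp_rw [this, Finset.prod_mul_distrib, ← Finset.prod_pow_eq_pow_sum]
  have h := polar (∑ i, a i) (fun x => ∏ i, x i ^ a i) hhom
  rw [gauss_mono] at h
  field_simp [(I_pos (d - 1 + ∑ i, a i)).ne']
  linarith [h]

lemma toSphere_univ_toReal :
    (((volume : Measure (EuclideanSpace ℝ (Fin d))).toSphere) Set.univ).toReal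
      = G 0 ^ d / I (d - 1) := by
  have h := sphere_mono (d := d) (fun _ => 0)
  simpa [integral_const, smul_eq_mul, measureReal_def] using h

lemma nu_integral (f : EuclideanSpace ℝ (Fin d) → ℝ) :
    ∫ u, f u ∂(uniformSphere d)
      = (∫ u : sphere (0 : EuclideanSpace ℝ (Fin d)) 1, f u
          ∂((volume : Measure (EuclideanSpace ℝ (Fin d))).toSphere))
        * (I (d - 1) / G 0 ^ d) := by
  have hmap : sphereMeasure d Set.univ
      = (volume : Measure (EuclideanSpace ℝ (Fin d))).toSphere Set.univ := by
    rw [sphereMeasure, Measure.map_apply measurable_subtype_coe MeasurableSet.univ]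
    simp
  rw [uniformSphere, integral_smul_measure, hmap, sphereMeasure,
    (MeasurableEmbedding.subtype_coe (isClosed_sphere.measurableSet)).integral_map f,
    ENNReal.toReal_inv, smul_eq_mul, mul_comm, toSphere_univ_toReal, inv_div]

lemma sphereMeasure_univ_ne_zero : sphereMeasure d Set.univ ≠ 0 := by
  have hmap : sphereMeasure d Set.univ
      = (volume : Measure (EuclideanSpace ℝ (Fin d))).toSphere Set.univ := by
    rw [sphereMeasure, Measure.map_apply measurable_subtype_coe MeasurableSet.univ]
    simp
  rw [hmap, Measure.toSphere_apply_univ]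
  refine mul_ne_zero ?_ ?_
  · simp [finrank_euclideanSpace_fin, NeZero.ne d]
  · exact (measure_ball_pos _ _ one_pos).ne'

lemma integrable_nu {F : EuclideanSpace ℝ (Fin d) → ℝ} (hF : Continuous F) :
    Integrable F (uniformSphere d) := by
  rw [uniformSphere]
  refine Integrable.smul_measure ?_ (ENNReal.inv_ne_top.2 sphereMeasure_univ_ne_zero)
  rw [sphereMeasure,
    (MeasurableEmbedding.subtype_coe (isClosed_sphere.measurableSet)).integrable_map_iff]
  exact (hF.comp continuous_subtype_val).integrable_of_hasCompactSupport
    (isClosed_tsupport _).isCompact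

/-! ### Finset helper lemmas -/

lemma prod_single_pow (j : Fin d) (n : ℕ) (v : Fin d → ℝ) :
    ∏ i, v i ^ (if i = j then n else 0) = v j ^ n := by
  rw [Finset.prod_eq_single j (fun b _ hb => by rw [if_neg hb, pow_zero])
    (fun h => absurd (Finset.mem_univ j) h)]
  rw [if_pos rfl]

lemma prod_pair_pow {j k : Fin d} (h : j ≠ k) (m n : ℕ) (v : Fin d → ℝ) :
    ∏ i, v i ^ (if i = j then m else if i = k then n else 0) = v j ^ m * v k ^ n := by
  calc ∏ i, v i ^ (if i = j then m else if i = k then n else 0)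
      = ∏ i ∈ ({j, k} : Finset (Fin d)), v i ^ (if i = j then m else if i = k then n else 0) := by
        refine (Finset.prod_subset (Finset.subset_univ _) (fun x _ hx => ?_)).symm
        simp only [Finset.mem_insert, Finset.mem_singleton, not_or] at hx
        rw [if_neg hx.1, if_neg hx.2, pow_zero]
    _ = v j ^ m * v k ^ n := by
        rw [Finset.prod_pair h]
        simp [Ne.symm h]

lemma sum_single (j : Fin d) (n : ℕ) : ∑ i, (if i = j then n else 0) = n := by
  simp

lemma sum_pair {j k : Fin d} (h : j ≠ k) (m n : ℕ) :
    ∑ i, (if i = j then m else if i = k then n else 0) = m + n := by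
  have : ∀ i, (if i = j then m else if i = k then n else 0)
      = (if i = j then m else 0) + (if i = k then n else 0) := by
    intro i
    by_cases h1 : i = j <;> by_cases h2 : i = k <;>
      simp [h1, h2] at * <;> simp_all
  simp_rw [this, Finset.sum_add_distrib]
  simp

lemma prod_G_single (j : Fin d) (n : ℕ) :
    ∏ i, G (if i = j then n else 0) = G n * G 0 ^ (d - 1) := by
  rw [← Finset.mul_prod_erase Finset.univ _ (Finset.mem_univ j), if_pos rfl]
  congr 1
  rw [Finset.prod_congr rfl (fun i hi => by rw [if_neg (Finset.ne_of_mem_erase hi)]),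
    Finset.prod_const, Finset.card_erase_of_mem (Finset.mem_univ j), Finset.card_univ,
    Fintype.card_fin]

lemma prod_G_pair {j k : Fin d} (h : j ≠ k) (m n : ℕ) :
    ∏ i, G (if i = j then m else if i = k then n else 0) = G m * G n * G 0 ^ (d - 2) := by
  have hk : k ∈ Finset.univ.erase j := Finset.mem_erase.2 ⟨Ne.symm h, Finset.mem_univ k⟩
  rw [← Finset.mul_prod_erase Finset.univ _ (Finset.mem_univ j), if_pos rfl,
    ← Finset.mul_prod_erase _ _ hk, if_neg (Ne.symm h), if_pos rfl, ← mul_assoc]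
  congr 1
  have hcong : ∀ i ∈ (Finset.univ.erase j).erase k,
      G (if i = j then m else if i = k then n else 0) = G 0 := by
    intro i hi
    rw [if_neg (Finset.ne_of_mem_erase (Finset.mem_of_mem_erase hi)),
      if_neg (Finset.ne_of_mem_erase hi)]
  rw [Finset.prod_congr rfl hcong, Finset.prod_const,
    Finset.card_erase_of_mem hk, Finset.card_erase_of_mem (Finset.mem_univ j),
    Finset.card_univ, Fintype.card_fin]
  norm_num [Nat.sub_sub]

/-! ### Gamma arithmetic for the radial integrals -/

lemma dpos : (0:ℝ) < (d:ℝ) := by exact_mod_cast Nat.pos_of_ne_zero (NeZero.ne d)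

lemma hd1 : ((d - 1 : ℕ) : ℝ) = (d:ℝ) - 1 := by
  have := NeZero.one_le (n := d)
  push_cast [Nat.cast_sub this]
  ring

lemma I_dm1 : I (d - 1) = Real.Gamma ((d:ℝ)/2) / 2 := by
  rw [I_eq, hd1]
  ring_nf

lemma I_dp1 : I (d - 1 + 2) = ((d:ℝ)/2) * (Real.Gamma ((d:ℝ)/2) / 2) := by
  have h1d : 1 ≤ d := NeZero.one_le
  have h : d - 1 + 2 = d + 1 := by omega
  rw [h, I_eq]
  push_cast
  rw [show ((d:ℝ) + 1 + 1)/2 = (d:ℝ)/2 + 1 by ring,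
    Real.Gamma_add_one (div_pos dpos two_pos).ne']
  ring
  
lemma I_dp3 : I (d - 1 + 4) = (((d:ℝ)+2)/2) * (((d:ℝ)/2) * (Real.Gamma ((d:ℝ)/2) / 2)) := by
  have h1d : 1 ≤ d := NeZero.one_le
  have h : d - 1 + 4 = d + 3 := by omega
  rw [h, I_eq]
  push_cast
  rw [show ((d:ℝ) + 3 + 1)/2 = ((d:ℝ)+2)/2 + 1 by ring,
    Real.Gamma_add_one (div_pos (by linarith [dpos (d := d)]) two_pos).ne',
    show ((d:ℝ) + 2)/2 = (d:ℝ)/2 + 1 by ring,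
    Real.Gamma_add_one (div_pos dpos two_pos).ne']
  ring

/-! ### second and fourth moments of the uniform sphere measure -/

lemma nu_mono (a : Fin d → ℕ) :
    ∫ u, (∏ i, u i ^ a i) ∂(uniformSphere d)
      = ((∏ i, G (a i)) / I (d - 1 + ∑ i, a i)) * (I (d - 1) / G 0 ^ d) := by
  rw [nu_integral, sphere_mono]

lemma nu_pair (j k : Fin d) :
    ∫ u, (u j * u k) ∂(uniformSphere d) = if j = k then 1/(d:ℝ) else 0 := by
  have h1d : 1 ≤ d := NeZero.one_le
  by_cases h : j = k
  · subst h
    have ha := nu_mono (fun i => if i = j then 2 else 0)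
    have hmono : ∀ u : EuclideanSpace ℝ (Fin d), (∏ i, u i ^ (if i = j then 2 else 0)) = u j * u j := by
      intro u; rw [prod_single_pow]; ring
    simp_rw [hmono] at ha
    rw [ha, if_pos rfl, sum_single, prod_G_single, I_dp1, I_dm1, G2_eq, G0_eq]
    have hGp : (0:ℝ) < Real.Gamma (1/2) := Real.Gamma_pos_of_pos (by norm_num)
    have hGd : (0:ℝ) < Real.Gamma ((d:ℝ)/2) := Real.Gamma_pos_of_pos (div_pos dpos two_pos)
    have hdp : (0:ℝ) < (d:ℝ) := by exact_mod_cast Nat.pos_of_ne_zero (NeZero.ne d)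
    have hpow : Real.Gamma (1/2) ^ d = Real.Gamma (1/2) ^ (d - 1) * Real.Gamma (1/2) := by
      rw [← pow_succ]; congr 1; omega
    rw [hpow]
    field_simp
  · have ha := nu_mono (fun i => if i = j then 1 else if i = k then 1 else 0)
    have hmono : ∀ u : EuclideanSpace ℝ (Fin d),
        (∏ i, u i ^ (if i = j then 1 else if i = k then 1 else 0)) = u j * u k := by
      intro u; rw [prod_pair_pow h]; ring
    simp_rw [hmono] at ha
    rw [ha, if_neg h, prod_G_pair h, G1_eq]
    ring

lemma nu_quad (j l k : Fin d) :
    ∫ u, (u j * u l * u k ^ 2) ∂(uniformSphere d)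
      = (if j = l then (if j = k then 3 else 1) else 0) / ((d:ℝ) * ((d:ℝ) + 2)) := by
  have h1d : 1 ≤ d := NeZero.one_le
  have hGp : (0:ℝ) < Real.Gamma (1/2) := Real.Gamma_pos_of_pos (by norm_num)
  have hGd : (0:ℝ) < Real.Gamma ((d:ℝ)/2) := Real.Gamma_pos_of_pos (div_pos dpos two_pos)
  have hdp : (0:ℝ) < (d:ℝ) := by exact_mod_cast Nat.pos_of_ne_zero (NeZero.ne d)
  by_cases hjl : j = l
  · subst hjl
    by_cases hjk : j = k
    · subst hjk
      have ha := nu_mono (fun i => if i = j then 4 else 0)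
      have hmono : ∀ u : EuclideanSpace ℝ (Fin d),
          (∏ i, u i ^ (if i = j then 4 else 0)) = u j * u j * u j ^ 2 := by
        intro u; rw [prod_single_pow]; ring
      simp_rw [hmono] at ha
      rw [ha, if_pos rfl, if_pos rfl, sum_single, prod_G_single, I_dp3, I_dm1, G4_eq, G0_eq]
      have hpow : Real.Gamma (1/2) ^ d = Real.Gamma (1/2) ^ (d - 1) * Real.Gamma (1/2) := by
        rw [← pow_succ]; congr 1; omega
      rw [hpow]
      field_simp
      ring
    · have ha := nu_mono (fun i => if i = j then 2 else if i = k then 2 else 0)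
      have hmono : ∀ u : EuclideanSpace ℝ (Fin d),
          (∏ i, u i ^ (if i = j then 2 else if i = k then 2 else 0)) = u j * u j * u k ^ 2 := by
        intro u; rw [prod_pair_pow hjk]; ring
      simp_rw [hmono] at ha
      rw [ha, if_pos rfl, if_neg hjk, sum_pair hjk, prod_G_pair hjk, I_dp3, I_dm1, G2_eq, G0_eq]
      have hd2 : 2 ≤ d := by
        have hcard := Fintype.one_lt_card_iff.2 ⟨j, k, hjk⟩
        rw [Fintype.card_fin] at hcard
        omega
      have hpow : Real.Gamma (1/2) ^ d
          = Real.Gamma (1/2) ^ (d - 2) * (Real.Gamma (1/2) * Real.Gamma (1/2)) := by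
        rw [← mul_assoc, ← pow_succ, ← pow_succ]; congr 1; omega
      rw [hpow]
      field_simp
  · -- j ≠ l : some coordinate has an odd exponent, so the integral vanishes
    rw [if_neg hjl]
    -- exponent function
    set a : Fin d → ℕ := fun i =>
      (if i = j then 1 else 0) + (if i = l then 1 else 0) + (if i = k then 2 else 0) with hadef
    have ha := nu_mono a
    have hmono : ∀ u : EuclideanSpace ℝ (Fin d),
        (∏ i, u i ^ a i) = u j * u l * u k ^ 2 := by
      intro u
      have hsplit : ∀ i, u i ^ a i
          = u i ^ (if i = j then 1 else 0) * u i ^ (if i = l then 1 else 0)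
            * u i ^ (if i = k then 2 else 0) := by
        intro i; rw [hadef]; rw [← pow_add, ← pow_add]
      simp_rw [hsplit, Finset.prod_mul_distrib, prod_single_pow]
      ring
    simp_rw [hmono] at ha
    rw [ha]
    have hodd : Odd (a j) := by
      by_cases hk : j = k
      · have hkl : ¬ k = l := hk ▸ hjl
        have : a j = 3 := by simp [hadef, hjl, hk, hkl]
        rw [this]; decide
      · have : a j = 1 := by simp [hadef, hjl, hk]
        rw [this]; decide
    have hzero : G (a j) = 0 := G_odd hodd
    rw [Finset.prod_eq_zero (Finset.mem_univ j) hzero]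
    simp

/-! ### the two key moments of the estimator -/

lemma cont_coord (j : Fin d) : Continuous (fun u : EuclideanSpace ℝ (Fin d) => u j) :=
  (EuclideanSpace.proj (𝕜 := ℝ) j).continuous

lemma euclid_norm_sq (g : EuclideanSpace ℝ (Fin d)) : ‖g‖ ^ 2 = ∑ i, g i ^ 2 := by
  rw [EuclideanSpace.norm_eq, Real.sq_sqrt (by positivity)]
  simp [sq_abs]

lemma nu_A (g : EuclideanSpace ℝ (Fin d)) (k : Fin d) :
    ∫ u, (⟪g, u⟫ * u k) ∂(uniformSphere d) = g k / d := by
  have hexp : ∀ u : EuclideanSpace ℝ (Fin d),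
      (⟪g, u⟫ * u k) = ∑ j, g j * (u j * u k) := by
    intro u
    rw [PiLp.inner_apply]
    simp only [RCLike.inner_apply, starRingEnd_apply, star_trivial]
    rw [Finset.sum_mul]
    exact Finset.sum_congr rfl fun j _ => by ring
  simp_rw [hexp]
  rw [integral_finset_sum _ (f := fun j (u : EuclideanSpace ℝ (Fin d)) => g j * (u j * u k)) (fun j _ => (integrable_nu ((cont_coord _).mul (cont_coord _))).const_mul _)]
  simp_rw [integral_const_mul, nu_pair]
  simp [Finset.sum_ite_eq', mul_ite]
  rw [div_eq_mul_inv, mul_comm]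

lemma nu_B (g : EuclideanSpace ℝ (Fin d)) (k : Fin d) :
    ∫ u, (⟪g, u⟫ * u k) ^ 2 ∂(uniformSphere d)
      = (‖g‖ ^ 2 + 2 * g k ^ 2) / ((d:ℝ) * ((d:ℝ) + 2)) := by
  have hexp : ∀ u : EuclideanSpace ℝ (Fin d),
      (⟪g, u⟫ * u k) ^ 2 = ∑ j, ∑ l, (g j * g l) * (u j * u l * u k ^ 2) := by
    intro u
    rw [PiLp.inner_apply]
    simp only [RCLike.inner_apply, starRingEnd_apply, star_trivial]
    rw [mul_pow, sq (∑ j, u j * g j), Finset.sum_mul_sum]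
    rw [Finset.sum_mul]
    refine Finset.sum_congr rfl fun j _ => ?_
    rw [Finset.sum_mul]
    exact Finset.sum_congr rfl fun l _ => by ring
  simp_rw [hexp]
  rw [integral_finset_sum _ (f := fun j (u : EuclideanSpace ℝ (Fin d)) => ∑ l, (g j * g l) * (u j * u l * u k ^ 2)) (fun j _ => integrable_finset_sum _
    (fun l _ => (integrable_nu (((cont_coord _).mul (cont_coord _)).mul
      ((cont_coord _).pow 2))).const_mul _))]
  have : ∀ j, ∫ u, (∑ l, (g j * g l) * ((fun u : EuclideanSpace ℝ (Fin d) => u j * u l * u k ^ 2) u)) ∂(uniformSphere d)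
      = ∑ l, (g j * g l) * ((if j = l then (if j = k then 3 else 1) else 0) / ((d:ℝ) * ((d:ℝ) + 2))) := by
    intro j
    rw [integral_finset_sum _ (f := fun l (u : EuclideanSpace ℝ (Fin d)) => (g j * g l) * (u j * u l * u k ^ 2)) (fun l _ => (integrable_nu (((cont_coord _).mul (cont_coord _)).mul
      ((cont_coord _).pow 2))).const_mul _)]
    simp_rw [integral_const_mul, nu_quad]
  simp_rw [this]
  have hsum : ∀ j : Fin d, ∑ l, (g j * g l) * ((if j = l then (if j = k then 3 else 1) else 0) / ((d:ℝ) * ((d:ℝ) + 2)))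
      = g j ^ 2 * (if j = k then 3 else 1) / ((d:ℝ) * ((d:ℝ) + 2)) := by
    intro j
    rw [Finset.sum_eq_single j (fun l _ hl => by rw [if_neg fun hh => hl hh.symm, zero_div, mul_zero]) (fun h => absurd (Finset.mem_univ j) h)]
    rw [if_pos rfl]
    ring
  simp_rw [hsum]
  have hnorm := euclid_norm_sq g
  have hd0 : ((d:ℝ) * ((d:ℝ) + 2)) ≠ 0 := by
    have hdp : (0:ℝ) < (d:ℝ) := by exact_mod_cast Nat.pos_of_ne_zero (NeZero.ne d)
    positivity
  have hsplit : ∀ j : Fin d, g j ^ 2 * (if j = k then 3 else 1) / ((d:ℝ) * ((d:ℝ) + 2))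
      = (g j ^ 2 + (if j = k then 2 * g k ^ 2 else 0)) / ((d:ℝ) * ((d:ℝ) + 2)) := by
    intro j
    by_cases hh : j = k
    · subst hh; rw [if_pos rfl, if_pos rfl]; ring
    · rw [if_neg hh, if_neg hh]; ring
  simp_rw [hsplit]
  rw [← Finset.sum_div, Finset.sum_add_distrib, Finset.sum_ite_eq' Finset.univ k
    (fun _ => 2 * g k ^ 2)]
  simp [hnorm]


lemma pi_integrable_prod {n : ℕ} {α : Type*} [MeasurableSpace α] (μ : Measure α) [IsProbabilityMeasure μ] {f : Fin n → α → ℝ} (hf : ∀ i, Integrable (f i) μ) :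
    Integrable (fun x : Fin n → α => ∏ i, f i (x i)) (Measure.pi fun _ => μ) := by
  induction n with
  | zero =>
    simp only [Finset.univ_eq_empty, Finset.prod_empty]
    apply integrable_const
  | succ n ih =>
    have hmp := (measurePreserving_piFinSuccAbove (fun _ : Fin (n + 1) => μ) 0).symm
      (MeasurableEquiv.piFinSuccAbove (fun _ : Fin (n + 1) => α) 0)
    rw [← hmp.integrable_comp_emb (MeasurableEquiv.measurableEmbedding _)]
    have heq : (fun x : Fin (n + 1) → α => ∏ i, f i (x i)) ∘
        (MeasurableEquiv.piFinSuccAbove (fun _ : Fin (n + 1) => α) 0).symm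
        = fun p : α × (Fin n → α) => f 0 p.1 * ∏ i : Fin n, f i.succ (p.2 i) := by
      funext p
      simp only [Function.comp_apply, MeasurableEquiv.piFinSuccAbove_symm_apply,
        Fin.insertNthEquiv, Equiv.coe_fn_mk, Fin.insertNth_zero, Fin.prod_univ_succ,
        Fin.cons_zero, Fin.cons_succ, cast_eq]
    rw [heq]
    exact (hf 0).mul_prod (ih (fun i => hf i.succ))

lemma pi_integral_prod {n : ℕ} {α : Type*} [MeasurableSpace α] (μ : Measure α) [SigmaFinite μ]
    (f : Fin n → α → ℝ) :
    ∫ x : Fin n → α, ∏ i, f i (x i) ∂(Measure.pi fun _ => μ) = ∏ i, ∫ x, f i x ∂μ := by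
  induction n with
  | zero =>
    simp only [Finset.univ_eq_empty, Finset.prod_empty]
    rw [integral_const]
    simp [Measure.pi_empty_univ, measureReal_def]
  | succ n ih =>
    have hmp := (measurePreserving_piFinSuccAbove (fun _ : Fin (n + 1) => μ) 0).symm
      (MeasurableEquiv.piFinSuccAbove (fun _ : Fin (n + 1) => α) 0)
    rw [← hmp.integral_comp' (fun x => ∏ i, f i (x i))]
    have heq : ∀ p : α × (Fin n → α),
        (∏ i, f i ((MeasurableEquiv.piFinSuccAbove (fun _ : Fin (n + 1) => α) 0).symm p i))
        = f 0 p.1 * ∏ i : Fin n, f i.succ (p.2 i) := by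
      intro p
      simp only [MeasurableEquiv.piFinSuccAbove_symm_apply,
        Fin.insertNthEquiv, Equiv.coe_fn_mk, Fin.insertNth_zero, Fin.prod_univ_succ,
        Fin.cons_zero, Fin.cons_succ, cast_eq]
    simp_rw [heq]
    rw [integral_prod_mul (f 0) (fun y : Fin n → α => ∏ i : Fin n, f i.succ (y i)), ih,
      Fin.prod_univ_succ]

lemma prod_pair_fun {q : ℕ} {i i' : Fin q} (h : i ≠ i') (v : Fin q → ℝ) :
    ∏ j, (if j = i then v j else if j = i' then v j else 1) = v i * v i' := by
  calc ∏ j, (if j = i then v j else if j = i' then v j else 1)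
      = ∏ j ∈ ({i, i'} : Finset (Fin q)), (if j = i then v j else if j = i' then v j else 1) := by
        refine (Finset.prod_subset (Finset.subset_univ _) (fun x _ hx => ?_)).symm
        simp only [Finset.mem_insert, Finset.mem_singleton, not_or] at hx
        rw [if_neg hx.1, if_neg hx.2]
    _ = v i * v i' := by
        rw [Finset.prod_pair h]
        simp [Ne.symm h]

end ZOAux

open ZOAux

/-- For a differentiable `f : ℝ^d → ℝ` with gradient `g = ∇f(x)` at `x`,
`q ≥ 1`, and `u_1, …, u_q` i.i.d. uniform on the unit sphere, the expectation of the squared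
`k`-th coordinate of `(d/q) ∑_i ⟨g, u_i⟩ u_i` equals
`d(‖g‖² + 2 g_k²)/(q(d+2)) + ((q−1)/q) g_k²`. -/
theorem uniform_zo_estimator_sq_expectation
    {d q : ℕ} [NeZero d] (hq : 1 ≤ q)
    (f : EuclideanSpace ℝ (Fin d) → ℝ) (x g : EuclideanSpace ℝ (Fin d))
    (hf : Differentiable ℝ f) (hg : gradient f x = g) (k : Fin d) :
    ∫ U : Fin q → EuclideanSpace ℝ (Fin d),
        ((((d : ℝ) / (q : ℝ)) • ∑ i : Fin q, ⟪g, U i⟫ • U i) k) ^ 2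
        ∂(Measure.pi fun _ : Fin q => uniformSphere d)
      = (d : ℝ) * (‖g‖ ^ 2 + 2 * g k ^ 2) / ((q : ℝ) * ((d : ℝ) + 2))
          + (((q : ℝ) - 1) / (q : ℝ)) * g k ^ 2 := by
  classical
  set X : EuclideanSpace ℝ (Fin d) → ℝ := fun u => ⟪g, u⟫ * u k with hX
  have hXc : Continuous X := (continuous_const.inner continuous_id).mul (cont_coord k)
  have hA : ∫ u, X u ∂(uniformSphere d) = g k / d := nu_A g k
  have hB : ∫ u, X u * X u ∂(uniformSphere d)
      = (‖g‖ ^ 2 + 2 * g k ^ 2) / ((d:ℝ) * ((d:ℝ) + 2)) := by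
    simp_rw [← sq]
    exact nu_B g k
  -- pointwise rewriting of the integrand
  have hpt : ∀ U : Fin q → EuclideanSpace ℝ (Fin d),
      ((((d : ℝ) / (q : ℝ)) • ∑ i : Fin q, ⟪g, U i⟫ • U i) k) ^ 2
      = ((d:ℝ)/(q:ℝ))^2 * ∑ i : Fin q, ∑ i' : Fin q, X (U i) * X (U i') := by
    intro U
    have hsum : (∑ i : Fin q, ⟪g, U i⟫ • U i) k = ∑ i : Fin q, X (U i) := by
      rw [show ((∑ i : Fin q, ⟪g, U i⟫ • U i) k) = ∑ i : Fin q, (⟪g, U i⟫ • U i) k from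
        by rw [WithLp.ofLp_sum, Finset.sum_apply]]
      exact Finset.sum_congr rfl fun i _ => by rw [PiLp.smul_apply, smul_eq_mul]
    rw [PiLp.smul_apply, smul_eq_mul, hsum, mul_pow, sq (∑ i : Fin q, X (U i)),
      Finset.sum_mul_sum]
  -- integrability and value of each pair term
  have hterm : ∀ i i' : Fin q,
      Integrable (fun U : Fin q → EuclideanSpace ℝ (Fin d) => X (U i) * X (U i'))
        (Measure.pi fun _ : Fin q => uniformSphere d)
      ∧ ∫ U : Fin q → EuclideanSpace ℝ (Fin d), X (U i) * X (U i')
          ∂(Measure.pi fun _ : Fin q => uniformSphere d)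
        = if i = i' then (‖g‖ ^ 2 + 2 * g k ^ 2) / ((d:ℝ) * ((d:ℝ) + 2))
          else (g k / d) * (g k / d) := by
    intro i i'
    by_cases h : i = i'
    · subst h
      set F : Fin q → EuclideanSpace ℝ (Fin d) → ℝ :=
        fun j v => if j = i then X v * X v else 1 with hF
      have hptF : ∀ U : Fin q → EuclideanSpace ℝ (Fin d),
          X (U i) * X (U i) = ∏ j, F j (U j) := by
        intro U
        rw [hF]
        rw [show (∏ j, if j = i then X (U j) * X (U j) else 1) = X (U i) * X (U i) from by
          rw [Finset.prod_ite_eq' Finset.univ i (fun j => X (U j) * X (U j)),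
            if_pos (Finset.mem_univ i)]]
      have hFint : ∀ j, Integrable (F j) (uniformSphere d) := by
        intro j
        rw [hF]
        dsimp only
        split_ifs
        · exact integrable_nu (hXc.mul hXc)
        · exact integrable_const 1
      constructor
      · simp_rw [hptF]
        exact pi_integrable_prod (uniformSphere d) hFint
      · simp_rw [hptF]
        rw [pi_integral_prod (uniformSphere d) F]
        have hFval : ∀ j, ∫ v, F j v ∂(uniformSphere d)
            = if j = i then (‖g‖ ^ 2 + 2 * g k ^ 2) / ((d:ℝ) * ((d:ℝ) + 2)) else 1 := by
          intro j
          rw [hF]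
          dsimp only
          split_ifs
          · exact hB
          · simp
        simp_rw [hFval]
        rw [Finset.prod_ite_eq' Finset.univ i
          (fun _ => (‖g‖ ^ 2 + 2 * g k ^ 2) / ((d:ℝ) * ((d:ℝ) + 2)))]
        simp
    · set F : Fin q → EuclideanSpace ℝ (Fin d) → ℝ :=
        fun j v => if j = i then X v else if j = i' then X v else 1 with hF
      have hptF : ∀ U : Fin q → EuclideanSpace ℝ (Fin d),
          X (U i) * X (U i') = ∏ j, F j (U j) := by
        intro U
        rw [hF]
        exact (prod_pair_fun h (fun j => X (U j))).symm
      have hFint : ∀ j, Integrable (F j) (uniformSphere d) := by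
        intro j
        rw [hF]
        dsimp only
        split_ifs
        · exact integrable_nu hXc
        · exact integrable_nu hXc
        · exact integrable_const 1
      constructor
      · simp_rw [hptF]
        exact pi_integrable_prod (uniformSphere d) hFint
      · simp_rw [hptF]
        rw [pi_integral_prod (uniformSphere d) F, if_neg h]
        have hFval : ∀ j, ∫ v, F j v ∂(uniformSphere d)
            = if j = i then g k / d else if j = i' then g k / d else 1 := by
          intro j
          rw [hF]
          dsimp only
          split_ifs
          · exact hA
          · exact hA
          · simp
        simp_rw [hFval]
        exact prod_pair_fun h (fun _ => g k / d)
  -- put everything together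
  simp_rw [hpt]
  rw [integral_const_mul]
  rw [integral_finset_sum _ (fun i _ => integrable_finset_sum _ (fun i' _ => (hterm i i').1))]
  have hinner : ∀ i : Fin q,
      ∫ U : Fin q → EuclideanSpace ℝ (Fin d), (∑ i' : Fin q, X (U i) * X (U i'))
          ∂(Measure.pi fun _ : Fin q => uniformSphere d)
      = ∑ i' : Fin q, (if i = i' then (‖g‖ ^ 2 + 2 * g k ^ 2) / ((d:ℝ) * ((d:ℝ) + 2))
          else (g k / d) * (g k / d)) := by
    intro i
    rw [integral_finset_sum _ (fun i' _ => (hterm i i').1)]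
    exact Finset.sum_congr rfl fun i' _ => (hterm i i').2
  simp_rw [hinner]
  -- evaluate the double sum
  set B : ℝ := (‖g‖ ^ 2 + 2 * g k ^ 2) / ((d:ℝ) * ((d:ℝ) + 2)) with hBdef
  set A2 : ℝ := (g k / d) * (g k / d) with hA2def
  have hsum2 : ∀ i : Fin q, ∑ i' : Fin q, (if i = i' then B else A2)
      = (q:ℝ) * A2 + (B - A2) := by
    intro i
    have : ∀ i' : Fin q, (if i = i' then B else A2)
        = A2 + (if i = i' then B - A2 else 0) := by
      intro i'; split_ifs <;> ring
    simp_rw [this, Finset.sum_add_distrib, Finset.sum_const, Finset.card_univ,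
      Fintype.card_fin, Finset.sum_ite_eq Finset.univ i (fun _ => B - A2),
      if_pos (Finset.mem_univ i)]
    push_cast
    ring
  simp_rw [hsum2, Finset.sum_const, Finset.card_univ, Fintype.card_fin, nsmul_eq_mul]
  -- final arithmetic
  have hdp : (0:ℝ) < (d:ℝ) := by exact_mod_cast Nat.pos_of_ne_zero (NeZero.ne d)
  have hqp : (0:ℝ) < (q:ℝ) := by exact_mod_cast hq
  rw [hBdef, hA2def]
  have hd2 : (0:ℝ) < (d:ℝ) + 2 := by linarith
  field_simp
  ring
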